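/- Let m ≥ 1 and let v_1, …, v_m be vectors in a real inner product space with ‖v_i‖² = 4 for every i, and suppose |⟨v_1, v_i⟩| ≥ 2 for every i ∈ {2,…,m}. Then the determinant of the m×m Gram matrix G, G_{i,j} = ⟨v_i, v_j⟩, satisfies det(G) ≤ 4 · 3^{m−1}. -/

import Mathlib

open Finset Matrix

local notation "⟪" x ", " y "⟫" => @inner ℝ _ _ x y

section aux
variable {E : Type*} [NormedAddCommGroup E] [InnerProductSpace ℝ E]

/-- One step of Gram-Schmidt reduction on the Gram determinant. -/
lemma gram_step {n : ℕ} (w : Fin (n+1) → E) (hw : w 0 ≠ 0) :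
    ∃ u : Fin n → E,
      (Matrix.of fun i j => (⟪w i, w j⟫ : ℝ)).det
        = ‖w 0‖ ^ 2 * (Matrix.of fun i j => (⟪u i, u j⟫ : ℝ)).det ∧
      ∀ i, ‖u i‖ ^ 2 = ‖w i.succ‖ ^ 2 - (⟪w 0, w i.succ⟫ : ℝ) ^ 2 / ‖w 0‖ ^ 2 := by
  have hn0 : (‖w 0‖ : ℝ) ^ 2 ≠ 0 := pow_ne_zero _ (norm_ne_zero_iff.mpr hw)
  set c : Fin (n+1) → ℝ := fun i => (⟪w 0, w i⟫ : ℝ) / ‖w 0‖ ^ 2 with hc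
  set w' : Fin (n+1) → E := fun i => w i - (if i = 0 then 0 else c i) • w 0 with hw'
  have hw'0 : w' 0 = w 0 := by simp [hw']
  have horth : ∀ i, i ≠ 0 → (⟪w 0, w' i⟫ : ℝ) = 0 := by
    intro i hi
    simp only [hw', hc, if_neg hi, inner_sub_right, real_inner_smul_right,
      real_inner_self_eq_norm_sq]
    field_simp
    ring
  set u : Fin n → E := fun i => w' i.succ with hu
  refine ⟨u, ?_, ?_⟩
  · -- determinant equality
    set B : Matrix (Fin (n+1)) (Fin (n+1)) ℝ :=
      fun i j => if i = j then 1 else if j = 0 then -(c i) else 0 with hB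
    have hBdet : B.det = 1 := by
      rw [Matrix.det_of_lowerTriangular B]
      · simp [hB]
      · intro i j hij
        have hij' : i < j := hij
        have h2 : j ≠ 0 := by
          intro h; subst h; exact absurd hij' (by simp)
        simp [hB, hij'.ne, h2]
    have hsum : ∀ i, (∑ k, B i k • w k) = w' i := by
      intro i
      have : ∀ k, B i k • w k =
          (if k = i then w i else 0) +
          (if k = 0 then (if i = 0 then 0 else (-(c i)) • w 0) else 0) := by
        intro k
        by_cases hki : k = i
        · subst hki
          by_cases hk0 : k = 0 <;> simp [hB, hk0]
        · by_cases hk0 : k = 0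
          · subst hk0
            have hi0 : i ≠ 0 := fun h => hki h.symm
            simp [hB, hi0, Ne.symm hi0]
          · simp [hB, hki, Ne.symm hki, hk0]
      rw [Finset.sum_congr rfl fun k _ => this k, Finset.sum_add_distrib]
      simp only [Finset.sum_ite_eq', Finset.mem_univ, if_true]
      by_cases hi : i = 0
      · simp [hw', hi]
      · simp [hw', hi, neg_smul, sub_eq_add_neg]
    have hGram : (Matrix.of fun i j => (⟪w' i, w' j⟫ : ℝ))
        = B * (Matrix.of fun i j => (⟪w i, w j⟫ : ℝ)) * Bᵀ := by
      ext i j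
      simp only [Matrix.of_apply]
      rw [← hsum i, ← hsum j]
      simp only [Matrix.mul_apply, Matrix.of_apply, Matrix.transpose_apply,
        sum_inner, inner_sum, real_inner_smul_left, real_inner_smul_right,
        Finset.sum_mul, Finset.mul_sum]
      exact Finset.sum_congr rfl fun k _ => Finset.sum_congr rfl fun l _ => by ring
    have hdetG : (Matrix.of fun i j => (⟪w' i, w' j⟫ : ℝ)).det
        = (Matrix.of fun i j => (⟪w i, w j⟫ : ℝ)).det := by
      rw [hGram, Matrix.det_mul, Matrix.det_mul, Matrix.det_transpose, hBdet]
      ring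
    rw [← hdetG]
    rw [Matrix.det_succ_row_zero]
    rw [Fin.sum_univ_succ]
    have h0 : ∀ j : Fin n, (Matrix.of fun i j => (⟪w' i, w' j⟫ : ℝ)) 0 j.succ = 0 := by
      intro j
      simp only [Matrix.of_apply]
      rw [hw'0]
      exact horth j.succ (Fin.succ_ne_zero j)
    rw [Finset.sum_eq_zero (fun j _ => by
      rw [h0 j]; ring)]
    simp only [Fin.val_zero, pow_zero, one_mul, add_zero, Matrix.of_apply]
    rw [hw'0, real_inner_self_eq_norm_sq]
    congr 1
  · intro i
    have h1 : (⟪w 0, u i⟫ : ℝ) = 0 := horth i.succ (Fin.succ_ne_zero i)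
    have h2 : w i.succ = u i + c i.succ • w 0 := by
      simp [hu, hw', Fin.succ_ne_zero i]
    have h3 : ‖w i.succ‖ ^ 2 = ‖u i‖ ^ 2 + (c i.succ) ^ 2 * ‖w 0‖ ^ 2 := by
      rw [h2, norm_add_sq_real, real_inner_smul_right, real_inner_comm, h1]
      rw [norm_smul]
      simp [mul_pow]
      try ring
    rw [h3, hc]
    field_simp
    ring
end aux

lemma gram_det_le_prod {E : Type*} [NormedAddCommGroup E] [InnerProductSpace ℝ E] :
    ∀ (n : ℕ) (w : Fin n → E),
      (Matrix.of fun i j => (⟪w i, w j⟫ : ℝ)).det ≤ ∏ i, ‖w i‖ ^ 2 := by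
  intro n
  induction n with
  | zero => intro w; simp [Matrix.det_fin_zero]
  | succ n ih =>
    intro w
    by_cases hw : w 0 = 0
    · have : (Matrix.of fun i j => (⟪w i, w j⟫ : ℝ)).det = 0 := by
        apply Matrix.det_eq_zero_of_row_eq_zero 0
        intro j
        simp [hw]
      rw [this]
      exact Finset.prod_nonneg fun i _ => by positivity
    · obtain ⟨u, hdet, hnu⟩ := gram_step w hw
      rw [hdet, Fin.prod_univ_succ]
      have h1 : (Matrix.of fun i j => (⟪u i, u j⟫ : ℝ)).det ≤ ∏ i, ‖u i‖ ^ 2 := ih u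
      have h2 : ∀ i, ‖u i‖ ^ 2 ≤ ‖w i.succ‖ ^ 2 := by
        intro i
        rw [hnu i]
        have : (0:ℝ) ≤ (⟪w 0, w i.succ⟫ : ℝ) ^ 2 / ‖w 0‖ ^ 2 := by positivity
        linarith
      calc ‖w 0‖ ^ 2 * (Matrix.of fun i j => (⟪u i, u j⟫ : ℝ)).det
          ≤ ‖w 0‖ ^ 2 * ∏ i : Fin n, ‖u i‖ ^ 2 := by
            apply mul_le_mul_of_nonneg_left h1 (by positivity)
        _ ≤ ‖w 0‖ ^ 2 * ∏ i : Fin n, ‖w i.succ‖ ^ 2 := by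
            apply mul_le_mul_of_nonneg_left _ (by positivity)
            exact Finset.prod_le_prod (fun i _ => by positivity) (fun i _ => h2 i)

theorem stmt_12 {E : Type*} [NormedAddCommGroup E] [InnerProductSpace ℝ E]
    (m : ℕ) (hm : 1 ≤ m) (v : Fin m → E)
    (hnorm : ∀ i, ‖v i‖ ^ 2 = 4)
    (hcorr : ∀ i : Fin m, i ≠ ⟨0, hm⟩ → |(inner ℝ (v ⟨0, hm⟩) (v i) : ℝ)| ≥ 2)
    (G : Matrix (Fin m) (Fin m) ℝ)
    (hG : ∀ i j, G i j = inner ℝ (v i) (v j)) :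
    G.det ≤ 4 * 3 ^ (m - 1) := by
  obtain ⟨n, rfl⟩ : ∃ n, m = n + 1 := ⟨m - 1, (Nat.succ_pred_eq_of_pos hm).symm⟩
  have hzero : (⟨0, hm⟩ : Fin (n+1)) = 0 := rfl
  have hGeq : G = Matrix.of fun i j => (⟪v i, v j⟫ : ℝ) := by
    ext i j; simp [hG]
  have hv0 : v 0 ≠ 0 := by
    intro h
    have := hnorm 0
    rw [h] at this
    simp at this
  obtain ⟨u, hdet, hnu⟩ := gram_step v hv0
  rw [hGeq, hdet, hnorm 0]
  have hub : ∀ i, ‖u i‖ ^ 2 ≤ 3 := by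
    intro i
    rw [hnu i, hnorm i.succ, hnorm 0]
    have habs : |(⟪v 0, v i.succ⟫ : ℝ)| ≥ 2 := by
      have := hcorr i.succ (by rw [hzero]; exact Fin.succ_ne_zero i)
      rwa [hzero] at this
    have hsq : (⟪v 0, v i.succ⟫ : ℝ) ^ 2 ≥ 4 := by
      have := sq_abs ((⟪v 0, v i.succ⟫ : ℝ))
      nlinarith
    linarith
  have h1 : (Matrix.of fun i j => (⟪u i, u j⟫ : ℝ)).det ≤ ∏ i : Fin n, ‖u i‖ ^ 2 :=
    gram_det_le_prod n u
  have h2 : (∏ i : Fin n, ‖u i‖ ^ 2) ≤ 3 ^ n := by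
    calc (∏ i : Fin n, ‖u i‖ ^ 2) ≤ ∏ i : Fin n, (3:ℝ) :=
          Finset.prod_le_prod (fun i _ => by positivity) (fun i _ => hub i)
      _ = 3 ^ n := by simp
  have : (n + 1) - 1 = n := rfl
  rw [this]
  nlinarith [h1, h2]
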